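/- Every clustering resulting from the greedy merging process satisfies at least half of all edges: if a clustering C has the property that for all pairs of distinct clusters the majority of edges between them is negative (|Γ⁺(C₁,C₂)| ≤ |C₁||C₂|/2), and each cluster was built by merges each of which had nonnegative gain starting from singletons, then profit(C) ≥ |E|/2. -/

import Mathlib

/-- Edge pairs of the complete graph on `Fin n`. -/
def edgePairs (n : ℕ) : Finset (Fin n × Fin n) :=
  Finset.univ.filter (fun p => p.1 < p.2)

/-- The gain of merging clusters `S` and `T`:
`|Γ⁺(S,T)| − |Γ⁻(S,T)| = 2|Γ⁺(S,T)| − |S||T|`. -/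
def gain {n : ℕ} (pos : Fin n → Fin n → Bool) (S T : Finset (Fin n)) : ℤ :=
  2 * ((S ×ˢ T).filter (fun p => pos p.1 p.2 = true)).card - S.card * T.card

/-- The all-singletons clustering. -/
def singletons (n : ℕ) : Finset (Finset (Fin n)) :=
  Finset.univ.image (fun v => {v})

/-- One greedy merge step: replace two distinct clusters with strictly positive
gain by their union. -/
def mergeStep {n : ℕ} (pos : Fin n → Fin n → Bool)
    (P Q : Finset (Finset (Fin n))) : Prop :=
  ∃ C C', C ∈ P ∧ C' ∈ P ∧ C ≠ C' ∧ 0 < gain pos C C' ∧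
    Q = insert (C ∪ C') ((P.erase C).erase C')

/-- The profit (number of agreements) of a clustering given as a set of clusters. -/
def partProfit {n : ℕ} (pos : Fin n → Fin n → Bool)
    (P : Finset (Finset (Fin n))) : ℕ :=
  ((edgePairs n).filter
    (fun p => ((∃ C ∈ P, p.1 ∈ C ∧ p.2 ∈ C) ↔ pos p.1 p.2 = true))).card

namespace GreedyAux

variable {n : ℕ}

lemma mem_edgePairs {p : Fin n × Fin n} : p ∈ edgePairs n ↔ p.1 < p.2 := by
  simp [edgePairs]

/-- Internal pairs of `C` satisfying `q`. -/
def inQ (q : Fin n → Fin n → Bool) (C : Finset (Fin n)) : Finset (Fin n × Fin n) :=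
  (edgePairs n).filter (fun p => p.1 ∈ C ∧ p.2 ∈ C ∧ q p.1 p.2 = true)

/-- Cross pairs between `S` and `T` satisfying `q`. -/
def crossQ (q : Fin n → Fin n → Bool) (S T : Finset (Fin n)) : Finset (Fin n × Fin n) :=
  (edgePairs n).filter
    (fun p => (p.1 ∈ S ∧ p.2 ∈ T ∨ p.1 ∈ T ∧ p.2 ∈ S) ∧ q p.1 p.2 = true)

lemma crossQ_card (q : Fin n → Fin n → Bool) (hq : ∀ u v, q u v = q v u)
    (S T : Finset (Fin n)) (hd : Disjoint S T) :
    (crossQ q S T).card = ((S ×ˢ T).filter (fun p => q p.1 p.2 = true)).card := by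
  apply Finset.card_nbij' (fun p => if p.1 ∈ S then p else p.swap)
    (fun p => if p.1 < p.2 then p else p.swap)
  · intro p hp
    dsimp only
    simp only [crossQ, Finset.mem_coe, Finset.mem_filter, mem_edgePairs] at hp
    obtain ⟨hlt, hcr, hqp⟩ := hp
    rcases hcr with ⟨h1, h2⟩ | ⟨h1, h2⟩
    · rw [if_pos h1]
      simp only [Finset.mem_coe, Finset.mem_filter, Finset.mem_product]
      exact ⟨⟨h1, h2⟩, hqp⟩
    · rw [if_neg (Finset.disjoint_right.mp hd h1)]
      simp only [Finset.mem_coe, Finset.mem_filter, Finset.mem_product, Prod.fst_swap, Prod.snd_swap]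
      exact ⟨⟨h2, h1⟩, (hq p.2 p.1).trans hqp⟩
  · intro p hp
    dsimp only
    simp only [Finset.mem_coe, Finset.mem_filter, Finset.mem_product] at hp
    obtain ⟨⟨h1, h2⟩, hqp⟩ := hp
    have hne : p.1 ≠ p.2 := fun h => Finset.disjoint_left.mp hd h1 (h ▸ h2)
    by_cases hlt : p.1 < p.2
    · rw [if_pos hlt]
      simp only [crossQ, Finset.mem_coe, Finset.mem_filter, mem_edgePairs]
      exact ⟨hlt, Or.inl ⟨h1, h2⟩, hqp⟩
    · rw [if_neg hlt]
      simp only [crossQ, Finset.mem_coe, Finset.mem_filter, mem_edgePairs, Prod.fst_swap, Prod.snd_swap]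
      exact ⟨lt_of_le_of_ne (not_lt.mp hlt) (Ne.symm hne), Or.inr ⟨h2, h1⟩,
        (hq p.2 p.1).trans hqp⟩
  · intro p hp
    dsimp only
    simp only [crossQ, Finset.mem_coe, Finset.mem_filter, mem_edgePairs] at hp
    obtain ⟨hlt, hcr, hqp⟩ := hp
    rcases hcr with ⟨h1, h2⟩ | ⟨h1, h2⟩
    · rw [if_pos h1, if_pos hlt]
    · rw [if_neg (Finset.disjoint_right.mp hd h1)]
      simp only [Prod.fst_swap, Prod.snd_swap]
      rw [if_neg (asymm hlt)]
      exact Prod.swap_swap p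
  · intro p hp
    dsimp only
    simp only [Finset.mem_coe, Finset.mem_filter, Finset.mem_product] at hp
    obtain ⟨⟨h1, h2⟩, hqp⟩ := hp
    by_cases hlt : p.1 < p.2
    · rw [if_pos hlt, if_pos h1]
    · rw [if_neg hlt]
      simp only [Prod.fst_swap, Prod.snd_swap]
      rw [if_neg (Finset.disjoint_right.mp hd h2)]
      exact Prod.swap_swap p

lemma inQ_union_card (q : Fin n → Fin n → Bool) (S T : Finset (Fin n))
    (hd : Disjoint S T) :
    (inQ q (S ∪ T)).card = (inQ q S).card + (inQ q T).card + (crossQ q S T).card := by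
  have hET : inQ q (S ∪ T) = inQ q S ∪ inQ q T ∪ crossQ q S T := by
    ext p
    simp only [inQ, crossQ, Finset.mem_union, Finset.mem_filter]
    constructor
    · rintro ⟨hp, h1, h2, hqp⟩
      rcases h1 with h1 | h1 <;> rcases h2 with h2 | h2
      · exact Or.inl (Or.inl ⟨hp, h1, h2, hqp⟩)
      · exact Or.inr ⟨hp, Or.inl ⟨h1, h2⟩, hqp⟩
      · exact Or.inr ⟨hp, Or.inr ⟨h1, h2⟩, hqp⟩
      · exact Or.inl (Or.inr ⟨hp, h1, h2, hqp⟩)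
    · rintro ((⟨hp, h1, h2, hqp⟩ | ⟨hp, h1, h2, hqp⟩) | ⟨hp, h1 | h1, hqp⟩)
      · exact ⟨hp, Or.inl h1, Or.inl h2, hqp⟩
      · exact ⟨hp, Or.inr h1, Or.inr h2, hqp⟩
      · exact ⟨hp, Or.inl h1.1, Or.inr h1.2, hqp⟩
      · exact ⟨hp, Or.inr h1.1, Or.inl h1.2, hqp⟩
  have d1 : Disjoint (inQ q S) (inQ q T) := by
    rw [Finset.disjoint_left]
    intro p hpS hpT
    simp only [inQ, Finset.mem_filter] at hpS hpT
    exact Finset.disjoint_left.mp hd hpS.2.1 hpT.2.1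
  have d2 : Disjoint (inQ q S ∪ inQ q T) (crossQ q S T) := by
    rw [Finset.disjoint_left]
    intro p hp hpc
    simp only [inQ, crossQ, Finset.mem_union, Finset.mem_filter] at hp hpc
    rcases hpc.2.1 with ⟨h1, h2⟩ | ⟨h1, h2⟩ <;> rcases hp with ⟨_, a1, a2, _⟩ | ⟨_, a1, a2, _⟩
    · exact Finset.disjoint_left.mp hd a2 h2
    · exact Finset.disjoint_left.mp hd h1 a1
    · exact Finset.disjoint_left.mp hd a1 h1
    · exact Finset.disjoint_left.mp hd h2 a2
  rw [hET, Finset.card_union_of_disjoint d2, Finset.card_union_of_disjoint d1]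

/-- The invariant along the greedy process. -/
def Inv (pos : Fin n → Fin n → Bool) (P : Finset (Finset (Fin n))) : Prop :=
  (∀ C ∈ P, ∀ C' ∈ P, C ≠ C' → Disjoint C C') ∧
  (∀ v : Fin n, ∃ C ∈ P, v ∈ C) ∧
  (∀ C ∈ P, (inQ (fun _ _ => true) C).card ≤ 2 * (inQ pos C).card)

lemma inv_singletons (pos : Fin n → Fin n → Bool) : Inv pos (singletons n) := by
  refine ⟨?_, ?_, ?_⟩
  · intro C hC C' hC' hne
    simp only [singletons, Finset.mem_image] at hC hC'
    obtain ⟨v, _, rfl⟩ := hC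
    obtain ⟨w, _, rfl⟩ := hC'
    have : v ≠ w := fun h => hne (by rw [h])
    exact Finset.disjoint_singleton.mpr this
  · intro v
    exact ⟨{v}, by simp [singletons], by simp⟩
  · intro C hC
    simp only [singletons, Finset.mem_image] at hC
    obtain ⟨v, _, rfl⟩ := hC
    have : inQ (fun _ _ => true) ({v} : Finset (Fin n)) = ∅ := by
      ext p
      simp only [inQ, Finset.mem_filter, mem_edgePairs, Finset.mem_singleton,
        Finset.notMem_empty, iff_false]
      rintro ⟨hlt, h1, h2, -⟩
      exact absurd (h1.trans h2.symm) hlt.ne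
    simp [this]

lemma inv_step (pos : Fin n → Fin n → Bool) (hsym : ∀ u v, pos u v = pos v u)
    {P Q : Finset (Finset (Fin n))} (hm : mergeStep pos P Q) (hI : Inv pos P) :
    Inv pos Q := by
  obtain ⟨C, C', hC, hC', hne, hg, rfl⟩ := hm
  obtain ⟨hdisj, hcov, hint⟩ := hI
  have hdCC' : Disjoint C C' := hdisj C hC C' hC' hne
  have hmem : ∀ D, D ∈ insert (C ∪ C') ((P.erase C).erase C') ↔
      D = C ∪ C' ∨ (D ∈ P ∧ D ≠ C ∧ D ≠ C') := by
    intro D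
    simp only [Finset.mem_insert, Finset.mem_erase]
    tauto
  refine ⟨?_, ?_, ?_⟩
  · intro D hD D' hD' hDne
    rw [hmem] at hD hD'
    rcases hD with rfl | ⟨hDP, hD1, hD2⟩
    · rcases hD' with rfl | ⟨hD'P, hD'1, hD'2⟩
      · exact absurd rfl hDne
      · exact Finset.disjoint_union_left.mpr
          ⟨hdisj C hC _ hD'P (Ne.symm hD'1), hdisj C' hC' _ hD'P (Ne.symm hD'2)⟩
    · rcases hD' with rfl | ⟨hD'P, hD'1, hD'2⟩
      · exact (Finset.disjoint_union_left.mpr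
          ⟨hdisj C hC _ hDP (Ne.symm hD1), hdisj C' hC' _ hDP (Ne.symm hD2)⟩).symm
      · exact hdisj D hDP D' hD'P hDne
  · intro v
    obtain ⟨D, hDP, hvD⟩ := hcov v
    by_cases h1 : D = C
    · exact ⟨C ∪ C', (hmem _).mpr (Or.inl rfl), Finset.mem_union_left _ (h1 ▸ hvD)⟩
    by_cases h2 : D = C'
    · exact ⟨C ∪ C', (hmem _).mpr (Or.inl rfl), Finset.mem_union_right _ (h2 ▸ hvD)⟩
    · exact ⟨D, (hmem _).mpr (Or.inr ⟨hDP, h1, h2⟩), hvD⟩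
  · intro D hD
    rw [hmem] at hD
    rcases hD with rfl | ⟨hDP, _, _⟩
    · have e1 := inQ_union_card (fun _ _ => true) C C' hdCC'
      have e2 := inQ_union_card pos C C' hdCC'
      have c1 : (crossQ (fun _ _ => true) C C').card = C.card * C'.card := by
        rw [crossQ_card (fun _ _ => true) (fun _ _ => rfl) C C' hdCC']
        simp [Finset.filter_true_of_mem]
      have c2 : (crossQ pos C C').card
          = ((C ×ˢ C').filter (fun p => pos p.1 p.2 = true)).card :=
        crossQ_card pos hsym C C' hdCC'
      have hg' : C.card * C'.card
          ≤ 2 * ((C ×ˢ C').filter (fun p => pos p.1 p.2 = true)).card := by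
        unfold gain at hg
        have h1 : ((C.card : ℤ) * C'.card)
            < 2 * ((C ×ˢ C').filter (fun p => pos p.1 p.2 = true)).card := by linarith
        exact_mod_cast h1.le
      have i1 := hint C hC
      have i2 := hint C' hC'
      rw [e1, e2, c1]
      omega
    · exact hint D hDP

lemma inv_reach (pos : Fin n → Fin n → Bool) (hsym : ∀ u v, pos u v = pos v u)
    {P : Finset (Finset (Fin n))}
    (h : Relation.ReflTransGen (mergeStep pos) (singletons n) P) : Inv pos P := by
  induction h with
  | refl => exact inv_singletons pos
  | tail _ hstep ih => exact inv_step pos hsym hstep ih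

lemma uniq {P : Finset (Finset (Fin n))}
    (hdisj : ∀ C ∈ P, ∀ C' ∈ P, C ≠ C' → Disjoint C C')
    {C D : Finset (Fin n)} (hC : C ∈ P) (hD : D ∈ P) {v : Fin n}
    (hvC : v ∈ C) (hvD : v ∈ D) : C = D := by
  by_contra h
  exact Finset.disjoint_left.mp (hdisj C hC D hD h) hvC hvD

lemma count2 {P : Finset (Finset (Fin n))}
    (hdisj : ∀ C ∈ P, ∀ C' ∈ P, C ≠ C' → Disjoint C C')
    (hcov : ∀ v : Fin n, ∃ C ∈ P, v ∈ C)
    {p : Fin n × Fin n} (hp : p ∈ edgePairs n) :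
    (P.offDiag.filter
      (fun Q => p.1 ∈ Q.1 ∧ p.2 ∈ Q.2 ∨ p.1 ∈ Q.2 ∧ p.2 ∈ Q.1)).card
      = if (∃ C ∈ P, p.1 ∈ C ∧ p.2 ∈ C) then 0 else 2 := by
  obtain ⟨A, hA, hpA⟩ := hcov p.1
  obtain ⟨B, hB, hpB⟩ := hcov p.2
  by_cases hE : ∃ C ∈ P, p.1 ∈ C ∧ p.2 ∈ C
  · rw [if_pos hE, Finset.card_eq_zero]
    obtain ⟨C, hC, h1, h2⟩ := hE
    ext Q
    simp only [Finset.mem_filter, Finset.mem_offDiag, Finset.notMem_empty, iff_false,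
      not_and]
    rintro ⟨hQ1, hQ2, hQne⟩ (⟨a1, a2⟩ | ⟨a1, a2⟩)
    · exact hQne ((uniq hdisj hQ1 hC a1 h1).trans (uniq hdisj hC hQ2 h2 a2))
    · exact hQne ((uniq hdisj hQ1 hC a2 h2).trans (uniq hdisj hC hQ2 h1 a1))
  · rw [if_neg hE]
    have hAB : A ≠ B := fun h => hE ⟨A, hA, hpA, h ▸ hpB⟩
    have hset : P.offDiag.filter
        (fun Q => p.1 ∈ Q.1 ∧ p.2 ∈ Q.2 ∨ p.1 ∈ Q.2 ∧ p.2 ∈ Q.1)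
        = {(A, B), (B, A)} := by
      ext Q
      simp only [Finset.mem_filter, Finset.mem_offDiag, Finset.mem_insert,
        Finset.mem_singleton]
      constructor
      · rintro ⟨⟨hQ1, hQ2, hQne⟩, ⟨a1, a2⟩ | ⟨a1, a2⟩⟩
        · left; rw [Prod.ext_iff]
          exact ⟨uniq hdisj hQ1 hA a1 hpA, uniq hdisj hQ2 hB a2 hpB⟩
        · right; rw [Prod.ext_iff]
          exact ⟨uniq hdisj hQ1 hB a2 hpB, uniq hdisj hQ2 hA a1 hpA⟩
      · rintro (rfl | rfl)
        · exact ⟨⟨hA, hB, hAB⟩, Or.inl ⟨hpA, hpB⟩⟩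
        · exact ⟨⟨hB, hA, hAB.symm⟩, Or.inr ⟨hpA, hpB⟩⟩
    rw [hset, Finset.card_insert_of_notMem, Finset.card_singleton]
    simp only [Finset.mem_singleton, Prod.mk.injEq, not_and]
    exact fun h => absurd h hAB

lemma sum_cross {P : Finset (Finset (Fin n))}
    (hdisj : ∀ C ∈ P, ∀ C' ∈ P, C ≠ C' → Disjoint C C')
    (hcov : ∀ v : Fin n, ∃ C ∈ P, v ∈ C) (q : Fin n → Fin n → Bool) :
    ∑ Q ∈ P.offDiag, (crossQ q Q.1 Q.2).card
      = 2 * ((edgePairs n).filter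
          (fun p => (¬ ∃ C ∈ P, p.1 ∈ C ∧ p.2 ∈ C) ∧ q p.1 p.2 = true)).card := by
  calc ∑ Q ∈ P.offDiag, (crossQ q Q.1 Q.2).card
      = ∑ Q ∈ P.offDiag, ∑ p ∈ edgePairs n,
          (if (p.1 ∈ Q.1 ∧ p.2 ∈ Q.2 ∨ p.1 ∈ Q.2 ∧ p.2 ∈ Q.1) ∧ q p.1 p.2 = true
            then 1 else 0) := by
        refine Finset.sum_congr rfl fun Q _ => ?_
        exact Finset.card_filter _ _
    _ = ∑ p ∈ edgePairs n, ∑ Q ∈ P.offDiag,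
          (if (p.1 ∈ Q.1 ∧ p.2 ∈ Q.2 ∨ p.1 ∈ Q.2 ∧ p.2 ∈ Q.1) ∧ q p.1 p.2 = true
            then 1 else 0) := Finset.sum_comm
    _ = ∑ p ∈ edgePairs n,
          (if (¬ ∃ C ∈ P, p.1 ∈ C ∧ p.2 ∈ C) ∧ q p.1 p.2 = true then 2 else 0) := by
        refine Finset.sum_congr rfl fun p hp => ?_
        by_cases hqp : q p.1 p.2 = true
        · simp only [hqp, and_true]
          rw [← Finset.card_filter, count2 hdisj hcov hp]
          by_cases hE : ∃ C ∈ P, p.1 ∈ C ∧ p.2 ∈ C <;> simp [hE]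
        · simp [hqp]
    _ = 2 * ((edgePairs n).filter
          (fun p => (¬ ∃ C ∈ P, p.1 ∈ C ∧ p.2 ∈ C) ∧ q p.1 p.2 = true)).card := by
        rw [Finset.card_filter, Finset.mul_sum]
        refine Finset.sum_congr rfl fun p hp => ?_
        split_ifs <;> rfl

end GreedyAux


theorem greedy_terminal_profit_ge_half {n : ℕ}
    (pos : Fin n → Fin n → Bool) (_hsym : ∀ u v, pos u v = pos v u)
    (P : Finset (Finset (Fin n)))
    (hreach : Relation.ReflTransGen (mergeStep pos) (singletons n) P)
    (hterm : ∀ C ∈ P, ∀ C' ∈ P, C ≠ C' → gain pos C C' ≤ 0) :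
    (edgePairs n).card ≤ 2 * partProfit pos P := by
  classical
  obtain ⟨hdisj, hcov, hint⟩ := GreedyAux.inv_reach pos _hsym hreach
  set E : Fin n × Fin n → Prop := fun p => ∃ C ∈ P, p.1 ∈ C ∧ p.2 ∈ C with hE
  set Int : Finset (Fin n × Fin n) := (edgePairs n).filter E with hInt
  set Ext : Finset (Fin n × Fin n) := (edgePairs n).filter (fun p => ¬ E p) with hExt
  set IntPos : Finset (Fin n × Fin n) :=
    (edgePairs n).filter (fun p => E p ∧ pos p.1 p.2 = true) with hIntPos
  set ExtNeg : Finset (Fin n × Fin n) :=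
    (edgePairs n).filter (fun p => ¬ E p ∧ pos p.1 p.2 = false) with hExtNeg
  -- total split
  have htot : (edgePairs n).card = Int.card + Ext.card :=
    (Finset.card_filter_add_card_filter_not (p := E)).symm
  -- profit split
  have hprof : partProfit pos P = IntPos.card + ExtNeg.card := by
    have hun : (edgePairs n).filter (fun p => (E p ↔ pos p.1 p.2 = true))
        = IntPos ∪ ExtNeg := by
      ext p
      simp only [hIntPos, hExtNeg, Finset.mem_union, Finset.mem_filter]
      cases h : pos p.1 p.2 <;> simp [h] <;> tauto
    have hdIE : Disjoint IntPos ExtNeg := by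
      rw [Finset.disjoint_left]
      intro p h1 h2
      simp only [hIntPos, hExtNeg, Finset.mem_filter] at h1 h2
      exact h2.2.1 h1.2.1
    rw [partProfit, hun, Finset.card_union_of_disjoint hdIE]
  -- internal part
  have hbiU : ∀ q : Fin n → Fin n → Bool,
      (edgePairs n).filter (fun p => E p ∧ q p.1 p.2 = true)
        = P.biUnion (GreedyAux.inQ q) := by
    intro q
    ext p
    simp only [Finset.mem_biUnion, GreedyAux.inQ, Finset.mem_filter, hE]
    tauto
  have hbd : ∀ q : Fin n → Fin n → Bool, ∀ C ∈ P, ∀ C' ∈ P, C ≠ C' →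
      Disjoint (GreedyAux.inQ q C) (GreedyAux.inQ q C') := by
    intro q C hC C' hC' hne
    rw [Finset.disjoint_left]
    intro p h1 h2
    simp only [GreedyAux.inQ, Finset.mem_filter] at h1 h2
    exact Finset.disjoint_left.mp (hdisj C hC C' hC' hne) h1.2.1 h2.2.1
  have hIntEq : Int = (edgePairs n).filter
      (fun p => E p ∧ (fun _ _ : Fin n => true) p.1 p.2 = true) := by
    simp [hInt]
  have hIntCard : Int.card = ∑ C ∈ P, (GreedyAux.inQ (fun _ _ => true) C).card := by
    rw [hIntEq, hbiU (fun _ _ => true), Finset.card_biUnion (hbd _)]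
  have hIntPosCard : IntPos.card = ∑ C ∈ P, (GreedyAux.inQ pos C).card := by
    rw [hIntPos, hbiU pos, Finset.card_biUnion (hbd _)]
  have hIntIneq : Int.card ≤ 2 * IntPos.card := by
    rw [hIntCard, hIntPosCard, Finset.mul_sum]
    exact Finset.sum_le_sum fun C hC => hint C hC
  -- external part
  have hA := GreedyAux.sum_cross hdisj hcov (fun _ _ : Fin n => true)
  have hB := GreedyAux.sum_cross hdisj hcov (fun u v => !pos u v)
  have hAx : ∑ Q ∈ P.offDiag, (GreedyAux.crossQ (fun _ _ => true) Q.1 Q.2).card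
      = 2 * Ext.card := by
    have h1 : (edgePairs n).filter
        (fun p => (¬ ∃ C ∈ P, p.1 ∈ C ∧ p.2 ∈ C)
          ∧ (fun _ _ : Fin n => true) p.1 p.2 = true) = Ext := by
      rw [hExt]
      apply Finset.filter_congr
      intro p _
      simp [hE]
    rw [hA, h1]
  have hBx : ∑ Q ∈ P.offDiag, (GreedyAux.crossQ (fun u v => !pos u v) Q.1 Q.2).card
      = 2 * ExtNeg.card := by
    have h1 : (edgePairs n).filter
        (fun p => (¬ ∃ C ∈ P, p.1 ∈ C ∧ p.2 ∈ C)
          ∧ (fun u v : Fin n => !pos u v) p.1 p.2 = true) = ExtNeg := by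
      rw [hExtNeg]
      apply Finset.filter_congr
      intro p _
      simp [hE, Bool.not_eq_true']
    rw [hB, h1]
  have hperQ : ∀ Q ∈ P.offDiag,
      (GreedyAux.crossQ (fun _ _ => true) Q.1 Q.2).card
        ≤ 2 * (GreedyAux.crossQ (fun u v => !pos u v) Q.1 Q.2).card := by
    intro Q hQ
    rw [Finset.mem_offDiag] at hQ
    obtain ⟨hQ1, hQ2, hQne⟩ := hQ
    have hd : Disjoint Q.1 Q.2 := hdisj _ hQ1 _ hQ2 hQne
    have hgain := hterm _ hQ1 _ hQ2 hQne
    have c1 : (GreedyAux.crossQ (fun _ _ => true) Q.1 Q.2).card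
        = Q.1.card * Q.2.card := by
      rw [GreedyAux.crossQ_card (fun _ _ => true) (fun _ _ => rfl) _ _ hd]
      simp [Finset.filter_true_of_mem]
    have c2 : (GreedyAux.crossQ (fun u v => !pos u v) Q.1 Q.2).card
        = ((Q.1 ×ˢ Q.2).filter (fun p => (!pos p.1 p.2) = true)).card :=
      GreedyAux.crossQ_card _ (fun u v => by rw [_hsym]) _ _ hd
    have hsplit : ((Q.1 ×ˢ Q.2).filter (fun p => pos p.1 p.2 = true)).card
        + ((Q.1 ×ˢ Q.2).filter (fun p => (!pos p.1 p.2) = true)).card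
        = Q.1.card * Q.2.card := by
      have h0 := Finset.card_filter_add_card_filter_not
        (s := Q.1 ×ˢ Q.2) (p := fun p : Fin n × Fin n => pos p.1 p.2 = true)
      have h1 : (Q.1 ×ˢ Q.2).filter (fun p => ¬ pos p.1 p.2 = true)
          = (Q.1 ×ˢ Q.2).filter (fun p => (!pos p.1 p.2) = true) := by
        apply Finset.filter_congr
        intro p _
        simp
      rw [h1, Finset.card_product] at h0
      exact h0
    have hg : 2 * ((Q.1 ×ˢ Q.2).filter (fun p => pos p.1 p.2 = true)).card
        ≤ Q.1.card * Q.2.card := by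
      unfold gain at hgain
      have : (2 * ((Q.1 ×ˢ Q.2).filter (fun p => pos p.1 p.2 = true)).card : ℤ)
          ≤ (Q.1.card : ℤ) * Q.2.card := by linarith
      exact_mod_cast this
    rw [c1, c2]
    omega
  have hExtIneq : Ext.card ≤ 2 * ExtNeg.card := by
    have := Finset.sum_le_sum hperQ
    rw [hAx] at this
    have h2 : ∑ Q ∈ P.offDiag,
        2 * (GreedyAux.crossQ (fun u v => !pos u v) Q.1 Q.2).card
        = 2 * (2 * ExtNeg.card) := by
      rw [← Finset.mul_sum, hBx]
    rw [h2] at this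
    omega
  omega
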